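/- arXiv:1101.4262 — 2 statements merged into one kernel-verified Lean document; each statement's English description precedes it below -/
import Mathlib

section
/- Let p(λ) = λ³ + (1.1-r)λ² + 0.2λ + 0.2(r+1). If -1 < r < 0.05, then every complex root of p has strictly negative real part. -/
/-- Routh–Hurwitz: for -1 < r < 0.05, every complex root of
λ³ + (1.1-r)λ² + 0.2λ + 0.2(r+1) has negative real part. -/
theorem routh_hurwitz_stable (r : ℝ) (h1 : -1 < r) (h2 : r < 0.05) :
    ∀ lam : ℂ,
      lam ^ 3 + ((1.1 : ℂ) - (r : ℂ)) * lam ^ 2 + 0.2 * lam + 0.2 * ((r : ℂ) + 1) = 0 →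
      lam.re < 0 := by
  intro lam heq
  by_contra hx
  push_neg at hx
  obtain ⟨x, y⟩ := lam
  simp only [Complex.ext_iff, Complex.add_re, Complex.add_im, Complex.mul_re, Complex.mul_im,
    Complex.sub_re, Complex.sub_im, Complex.ofReal_re, Complex.ofReal_im, Complex.zero_re,
    Complex.zero_im, pow_succ, pow_zero, one_mul] at heq
  obtain ⟨hre, him⟩ := heq
  norm_num at hre him hx ⊢
  ring_nf at hre him
  have h3 : y * (x * (11/5) - x * r * 2 + 3 * x ^ 2 + 1/5 - y ^ 2) = 0 := by
    linear_combination him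
  rcases mul_eq_zero.mp h3 with hy | hq
  · subst hy
    nlinarith [sq_nonneg x, mul_nonneg hx hx, mul_nonneg (mul_nonneg hx hx) hx]
  · have hy2 : y ^ 2 = 3 * x ^ 2 + (11/5 - 2*r) * x + 1/5 := by linarith
    nlinarith [mul_nonneg hx hx, mul_nonneg (mul_nonneg hx hx) hx,
      mul_nonneg (mul_nonneg hx hx) (le_of_lt (by linarith : (0:ℝ) < 11/10 - r)),
      mul_nonneg hx (le_of_lt (by nlinarith : (0:ℝ) < (11/10 - r)^2))]
end

section
/- Let p(λ) = λ³ + (1.1-r)λ² + 0.2λ + 0.2(r+1). If 0.05 < r < 1.1, then p has a complex root with strictly positive real part. -/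
/-- For 0.05 < r < 1.1, the cubic λ³ + (1.1-r)λ² + 0.2λ + 0.2(r+1) has a
complex root with strictly positive real part. -/
theorem unstable_root_exists (r : ℝ) (h1 : 0.05 < r) (h2 : r < 1.1) :
    ∃ lam : ℂ,
      lam ^ 3 + ((1.1 : ℂ) - (r : ℂ)) * lam ^ 2 + 0.2 * lam + 0.2 * ((r : ℂ) + 1) = 0 ∧
      0 < lam.re := by
  have e11 : (1.1 : ℂ) = 11 / 10 := by norm_num
  have e02 : (0.2 : ℂ) = 1 / 5 := by norm_num
  have h1' : (1 : ℝ) / 20 < r := by linarith [h1, (by norm_num : (0.05 : ℝ) = 1 / 20)]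
  have h2' : r < 11 / 10 := by linarith [h2, (by norm_num : (1.1 : ℝ) = 11 / 10)]
  simp only [e11, e02]
  -- real cubic: find a real root by the intermediate value theorem
  set f : ℝ → ℝ := fun x => x ^ 3 + (11 / 10 - r) * x ^ 2 + (1 / 5) * x + (1 / 5) * (r + 1)
    with hf
  have hcont : ContinuousOn f (Set.Icc (-3 : ℝ) 0) := by fun_prop
  have hfa : f (-3) ≤ 0 := by simp only [hf]; nlinarith
  have hfb : (0 : ℝ) ≤ f 0 := by simp only [hf]; nlinarith
  have hmem : (0 : ℝ) ∈ Set.Icc (f (-3)) (f 0) := ⟨hfa, hfb⟩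
  obtain ⟨t, -, hq⟩ := intermediate_value_Icc (by norm_num) hcont hmem
  simp only [hf] at hq
  set B : ℝ := 11 / 10 - r + t with hB
  set C : ℝ := 1 / 5 + B * t with hC
  clear_value B C
  have hkey : B * (t ^ 2 + 1 / 5) = 1 / 50 - (2 / 5) * r := by
    rw [hB]; linear_combination hq
  have hBneg : B < 0 := by
    by_contra hge
    push_neg at hge
    have hpos : (0:ℝ) < t ^ 2 + 1 / 5 := by positivity
    nlinarith [mul_nonneg hge hpos.le]
  have hqC : (t : ℂ) ^ 3 + ((11 / 10 : ℂ) - (r : ℂ)) * (t : ℂ) ^ 2 + (1 / 5) * (t : ℂ)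
      + (1 / 5) * ((r : ℂ) + 1) = 0 := by
    have := congrArg (fun x : ℝ => (x : ℂ)) hq
    push_cast at this
    exact this
  -- factorization: it suffices to find a root of the quadratic factor
  have hfact : ∀ lam : ℂ,
      lam ^ 3 + ((11 / 10 : ℂ) - (r : ℂ)) * lam ^ 2 + (1 / 5) * lam + (1 / 5) * ((r : ℂ) + 1)
        = (lam - (t : ℂ)) * (lam ^ 2 + (B : ℝ) * lam + (C : ℝ)) := by
    intro lam
    rw [hC, hB]
    push_cast
    linear_combination hqC
  suffices h : ∃ lam : ℂ, lam ^ 2 + (B : ℝ) * lam + (C : ℝ) = 0 ∧ 0 < lam.re by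
    obtain ⟨lam, hroot, hre⟩ := h
    exact ⟨lam, by rw [hfact, hroot, mul_zero], hre⟩
  rcases le_or_gt 0 (B ^ 2 - 4 * C) with hd | hd
  · -- real roots case
    set s : ℝ := Real.sqrt (B ^ 2 - 4 * C) with hs
    have hs2 : s ^ 2 = B ^ 2 - 4 * C := Real.sq_sqrt hd
    have hsnn : 0 ≤ s := hs ▸ Real.sqrt_nonneg _
    clear_value s
    refine ⟨(((-B + s) / 2 : ℝ) : ℂ), ?_, ?_⟩
    · have hx : ((-B + s) / 2) ^ 2 + B * ((-B + s) / 2) + C = 0 := by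
        linear_combination hs2 / 4
      have := congrArg (fun x : ℝ => (x : ℂ)) hx
      push_cast at this ⊢
      linear_combination this
    · simp only [Complex.ofReal_re]
      linarith
  · -- complex conjugate roots case
    set s : ℝ := Real.sqrt (4 * C - B ^ 2) with hs
    have hs2 : s ^ 2 = 4 * C - B ^ 2 := Real.sq_sqrt (by linarith)
    have hsnn : 0 ≤ s := hs ▸ Real.sqrt_nonneg _
    clear_value s
    refine ⟨((-B / 2 : ℝ) : ℂ) + ((s / 2 : ℝ) : ℂ) * Complex.I, ?_, ?_⟩
    · have hs2C : ((s : ℂ)) ^ 2 = 4 * (C : ℂ) - (B : ℂ) ^ 2 := by exact_mod_cast hs2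
      push_cast
      linear_combination ((s : ℂ) ^ 2 / 4) * Complex.I_sq - (1 / 4 : ℂ) * hs2C
    · simp [Complex.add_re, Complex.mul_re]
      linarith
end
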